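/- arXiv:2402.14781 — 2 statements merged into one kernel-verified Lean document; each statement's English description precedes it below -/
import Mathlib

section
/- Let d be a natural number and for each i ∈ Fin d let S i be a nonempty finite type (the candidate parent sets of node i), and let p i, w i, Y i : S i → ℝ. Define α j = ∑_{s ∈ S j} p j s · w j s for each j ∈ Fin d. Then ∑_{G ∈ Π_i S i} (∏_i p i (G i) · w i (G i)) · (∑_j Y j (G j)) = ∑_i (∏_{j ≠ i} α j) · (∑_{s ∈ S i} p i s · w i s · Y i s). -/
/-- Proposition 2: the expectation of a summing query with factorising weights under a
factorising graph prior decomposes into a weighted sum of per-node sums. -/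
theorem sum_prod_mul_sum_eq
    (d : ℕ) (S : Fin d → Type) [∀ i, Fintype (S i)] [∀ i, Nonempty (S i)]
    (p w Y : ∀ i, S i → ℝ) (α : Fin d → ℝ)
    (hα : ∀ j, α j = ∑ s : S j, p j s * w j s) :
    ∑ G : (∀ i, S i), (∏ i, p i (G i) * w i (G i)) * (∑ j, Y j (G j))
      = ∑ i, (∏ j ∈ Finset.univ.erase i, α j) * (∑ s : S i, p i s * w i s * Y i s) := by
  simp only [Finset.mul_sum]
  rw [Finset.sum_comm]
  refine Finset.sum_congr rfl fun j _ => ?_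
  classical
  set g : ∀ i, S i → ℝ := fun i (s : S i) => if h : i = j then
      p i s * w i s * Y j (h ▸ s) else p i s * w i s with hg
  have key : ∀ G : (∀ i, S i),
      (∏ i, p i (G i) * w i (G i)) * Y j (G j) = ∏ i, g i (G i) := by
    intro G
    simp only [hg]
    rw [← Finset.prod_erase_mul _ _ (Finset.mem_univ j),
        ← Finset.prod_erase_mul _ _ (Finset.mem_univ j)]
    simp only [dif_pos rfl]
    rw [mul_assoc]
    congr 1
    exact Finset.prod_congr rfl fun i hi => by
      rw [dif_neg (Finset.ne_of_mem_erase hi)]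
  simp only [key]
  rw [← Fintype.piFinset_univ,
      ← Finset.prod_univ_sum (fun i => (Finset.univ : Finset (S i))) g,
      ← Finset.prod_erase_mul _ _ (Finset.mem_univ j)]
  rw [← Finset.mul_sum]
  refine congrArg₂ (fun a b : ℝ => a * b) ?_ ?_
  · refine Finset.prod_congr rfl fun i hi => ?_
    rw [hα i]
    exact (Finset.sum_congr rfl fun s _ => by
      simp only [hg]; rw [dif_neg (Finset.ne_of_mem_erase hi)]).symm
  · exact Finset.sum_congr rfl fun s _ => by simp [hg]
end

section
/- Let d be a natural number, for each i ∈ Fin d let S i be a nonempty finite type, fix a node k ∈ Fin d and a distinguished parent set s* ∈ S k. Let 𝓛 be a nonempty finite type with q : 𝓛 → ℝ nonnegative summing to 1 and r : 𝓛 → (Π_i S i) → ℝ nonnegative with ∑_G r L G = 1 for all L. For i ≠ k let ℓ i : S i → ℝ be positive constants, and let ℓ k : ℝ → S k → ℝ be positive with ℓ k ψ s = ℓ k 0 s for all ψ whenever s ≠ s*, and with ψ ↦ ℓ k ψ s* differentiable. Define F(ψ) = ∑_L q L · ∑_G r L G · (∏_{i ≠ k} ℓ i (G i)) · ℓ k ψ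 (G k). Then for every ψ₀, the derivative of ψ ↦ log F(ψ) at ψ₀ equals c · (derivative of ψ ↦ log ℓ k ψ s* at ψ₀), where c = (∑_L q L · ∑_{G : G k = s*} r L G · (∏_{i ≠ k} ℓ i (G i)) · ℓ k ψ₀ (G k)) / F(ψ₀), and 0 ≤ c ≤ 1. -/
/-- Appendix B.2: the gradient of the log posterior w.r.t. the hyper-parameters of a
single GP (associated with node `k` and parent set `sstar`) is a nonnegative scalar
multiple (with factor in `[0,1]`) of the MAP type-II gradient of that GP. -/
theorem gp_hyperparameter_gradient
    (d : ℕ) (S : Fin d → Type) [∀ i, Fintype (S i)] [∀ i, Nonempty (S i)]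
    (k : Fin d) [DecidableEq (S k)] (sstar : S k)
    (𝓛 : Type) [Fintype 𝓛] [Nonempty 𝓛]
    (q : 𝓛 → ℝ) (hq : ∀ L, 0 ≤ q L) (hqsum : ∑ L, q L = 1)
    (r : 𝓛 → (∀ i, S i) → ℝ) (hr : ∀ L G, 0 ≤ r L G) (hrsum : ∀ L, ∑ G, r L G = 1)
    (ℓ : ∀ i, S i → ℝ) (hℓpos : ∀ i, i ≠ k → ∀ s, 0 < ℓ i s)
    (ℓk : ℝ → S k → ℝ) (hℓkpos : ∀ ψ s, 0 < ℓk ψ s)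
    (hℓkconst : ∀ ψ s, s ≠ sstar → ℓk ψ s = ℓk 0 s)
    (hℓkdiff : Differentiable ℝ (fun ψ => ℓk ψ sstar))
    (F : ℝ → ℝ)
    (hF : ∀ ψ, F ψ =
      ∑ L, q L * ∑ G : (∀ i, S i),
        r L G * (∏ i ∈ Finset.univ.erase k, ℓ i (G i)) * ℓk ψ (G k))
    (ψ₀ : ℝ) (c : ℝ)
    (hc : c =
      (∑ L, q L * ∑ G ∈ Finset.univ.filter (fun G : (∀ i, S i) => G k = sstar),
        r L G * (∏ i ∈ Finset.univ.erase k, ℓ i (G i)) * ℓk ψ₀ (G k)) / F ψ₀) :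
    HasDerivAt (fun ψ => Real.log (F ψ))
        (c * deriv (fun ψ => Real.log (ℓk ψ sstar)) ψ₀) ψ₀
      ∧ 0 ≤ c ∧ c ≤ 1 := by
  classical
  set g : ℝ → ℝ := fun ψ => ℓk ψ sstar with hgdef
  set prodℓ : (∀ i, S i) → ℝ := fun G => ∏ i ∈ Finset.univ.erase k, ℓ i (G i)
    with hproddef
  have hprodpos : ∀ G, 0 < prodℓ G := by
    intro G
    apply Finset.prod_pos
    intro i hi
    exact hℓpos i (Finset.ne_of_mem_erase hi) _
  set B : ℝ := ∑ L, q L * ∑ G ∈ Finset.univ.filter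
      (fun G : (∀ i, S i) => G k = sstar), r L G * prodℓ G with hBdef
  set A : ℝ := ∑ L, q L * ∑ G ∈ Finset.univ.filter
      (fun G : (∀ i, S i) => ¬ G k = sstar), r L G * prodℓ G * ℓk 0 (G k) with hAdef
  -- per-L filtered identities
  have h1 : ∀ ψ L, ∑ G ∈ Finset.univ.filter (fun G : (∀ i, S i) => G k = sstar),
      r L G * prodℓ G * ℓk ψ (G k)
      = (∑ G ∈ Finset.univ.filter (fun G : (∀ i, S i) => G k = sstar),
        r L G * prodℓ G) * g ψ := by
    intro ψ L
    rw [Finset.sum_mul]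
    apply Finset.sum_congr rfl
    intro G hG
    rw [(Finset.mem_filter.mp hG).2]
  have h2 : ∀ ψ L, ∑ G ∈ Finset.univ.filter (fun G : (∀ i, S i) => ¬ G k = sstar),
      r L G * prodℓ G * ℓk ψ (G k)
      = ∑ G ∈ Finset.univ.filter (fun G : (∀ i, S i) => ¬ G k = sstar),
        r L G * prodℓ G * ℓk 0 (G k) := by
    intro ψ L
    apply Finset.sum_congr rfl
    intro G hG
    rw [hℓkconst ψ (G k) (Finset.mem_filter.mp hG).2]
  have hsplit : ∀ ψ, F ψ = A + B * g ψ := by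
    intro ψ
    rw [hF, hAdef, hBdef, Finset.sum_mul, ← Finset.sum_add_distrib]
    apply Finset.sum_congr rfl
    intro L _
    rw [← Finset.sum_filter_add_sum_filter_not Finset.univ
      (fun G : (∀ i, S i) => G k = sstar)
      (fun G => r L G * prodℓ G * ℓk ψ (G k)), h1 ψ L, h2 ψ L]
    ring
  have hFpos : ∀ ψ, 0 < F ψ := by
    intro ψ
    rw [hF]
    obtain ⟨L₀, hL₀⟩ : ∃ L, 0 < q L := by
      by_contra h
      push_neg at h
      have : ∑ L, q L ≤ 0 := Finset.sum_nonpos fun L _ => h L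
      linarith
    obtain ⟨G₀, hG₀⟩ : ∃ G, 0 < r L₀ G := by
      by_contra h
      push_neg at h
      have : ∑ G, r L₀ G ≤ 0 := Finset.sum_nonpos fun G _ => h G
      linarith [hrsum L₀]
    have hterm : ∀ L G, 0 ≤ r L G * prodℓ G * ℓk ψ (G k) := fun L G =>
      mul_nonneg (mul_nonneg (hr L G) (hprodpos G).le) (hℓkpos ψ (G k)).le
    apply Finset.sum_pos'
    · intro L _
      exact mul_nonneg (hq L) (Finset.sum_nonneg fun G _ => hterm L G)
    · refine ⟨L₀, Finset.mem_univ _, mul_pos hL₀ (Finset.sum_pos' (fun G _ => hterm L₀ G) ⟨G₀, Finset.mem_univ _, ?_⟩)⟩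
      exact mul_pos (mul_pos hG₀ (hprodpos G₀)) (hℓkpos ψ (G₀ k))
  have hBnonneg : 0 ≤ B := by
    rw [hBdef]
    exact Finset.sum_nonneg fun L _ => mul_nonneg (hq L)
      (Finset.sum_nonneg fun G _ => mul_nonneg (hr L G) (hprodpos G).le)
  have hAnonneg : 0 ≤ A := by
    rw [hAdef]
    exact Finset.sum_nonneg fun L _ => mul_nonneg (hq L)
      (Finset.sum_nonneg fun G _ => mul_nonneg (mul_nonneg (hr L G) (hprodpos G).le)
        (hℓkpos 0 (G k)).le)
  -- rewrite c
  have hcval : c = B * g ψ₀ / F ψ₀ := by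
    rw [hc]
    congr 1
    rw [hBdef, Finset.sum_mul]
    apply Finset.sum_congr rfl
    intro L _
    rw [mul_assoc, ← h1 ψ₀ L]
  have hgpos : 0 < g ψ₀ := hℓkpos ψ₀ sstar
  have hgd : HasDerivAt g (deriv g ψ₀) ψ₀ := (hℓkdiff ψ₀).hasDerivAt
  have hlogg : HasDerivAt (fun ψ => Real.log (g ψ)) (deriv g ψ₀ / g ψ₀) ψ₀ :=
    hgd.log hgpos.ne'
  have hderivlog : deriv (fun ψ => Real.log (ℓk ψ sstar)) ψ₀ = deriv g ψ₀ / g ψ₀ :=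
    hlogg.deriv
  have hF₀ : F ψ₀ = A + B * g ψ₀ := hsplit ψ₀
  have hFd : HasDerivAt F (B * deriv g ψ₀) ψ₀ := by
    have h : HasDerivAt (fun ψ => A + B * g ψ) (B * deriv g ψ₀) ψ₀ := by
      simpa using ((hgd.const_mul B).const_add A)
    exact h.congr_of_eventuallyEq (Filter.Eventually.of_forall hsplit)
  have hlogF : HasDerivAt (fun ψ => Real.log (F ψ)) (B * deriv g ψ₀ / F ψ₀) ψ₀ :=
    hFd.log (hFpos ψ₀).ne'
  refine ⟨?_, ?_, ?_⟩
  · have : c * deriv (fun ψ => Real.log (ℓk ψ sstar)) ψ₀ = B * deriv g ψ₀ / F ψ₀ := by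
      rw [hderivlog, hcval]
      field_simp
    rw [this]
    exact hlogF
  · rw [hcval]
    exact div_nonneg (mul_nonneg hBnonneg hgpos.le) (hFpos ψ₀).le
  · rw [hcval, div_le_one (hFpos ψ₀)]
    rw [hF₀]
    linarith
end
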